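/- The maximal safe set Ω* is the largest set S ⊆ Z such that (i) S ∩ F = ∅ and (ii) for every z ∈ S there exists a ∈ A with f(z, a, b) ∈ S for all b ∈ B(z). That is, any set S satisfying (i) and (ii) is contained in Ω*, and Ω* itself satisfies (i) and (ii). -/

import Mathlib

/-- Closed-loop trajectory under policy `π` and adversary sequence `b`. -/
def traj {Z A B : Type*} (f : Z → A → B → Z) (π : Z → A) (b : ℕ → B) (z0 : Z) : ℕ → Z
  | 0 => z0
  | t + 1 => f (traj f π b z0 t) (π (traj f π b z0 t)) (b t)

/-- The maximal safe set Ω*. -/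
def SafeSet {Z A B : Type*} (f : Z → A → B → Z) (Badm : Z → Set B) (F : Set Z) : Set Z :=
  {z0 | ∃ π : Z → A, ∀ b : ℕ → B,
    (∀ t, b t ∈ Badm (traj f π b z0 t)) → ∀ t, traj f π b z0 t ∉ F}

/-- Ω* is the largest set disjoint from F and controlled-invariant. -/
theorem safeSet_largest_invariant {Z A B : Type*} [Nonempty A]
    (f : Z → A → B → Z) (Badm : Z → Set B) (F : Set Z)
    (hB : ∀ z, (Badm z).Nonempty) :
    (∀ S : Set Z, S ∩ F = ∅ →
        (∀ z ∈ S, ∃ a : A, ∀ b ∈ Badm z, f z a b ∈ S) →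
        S ⊆ SafeSet f Badm F) ∧
    SafeSet f Badm F ∩ F = ∅ ∧
    (∀ z ∈ SafeSet f Badm F, ∃ a : A, ∀ b ∈ Badm z, f z a b ∈ SafeSet f Badm F) := by
  refine ⟨?_, ?_, ?_⟩
  · -- largest
    intro S hSF hInv z0 hz0
    classical
    set π : Z → A := fun z => if h : z ∈ S then (hInv z h).choose else Classical.arbitrary A
      with hπ
    refine ⟨π, fun b hadm => ?_⟩
    have hS : ∀ t, traj f π b z0 t ∈ S := by
      intro t
      induction t with
      | zero => exact hz0
      | succ t ih =>
        have hb := hadm t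
        show f (traj f π b z0 t) (π (traj f π b z0 t)) (b t) ∈ S
        have : π (traj f π b z0 t) = (hInv _ ih).choose := by exact dif_pos ih
        rw [this]
        exact (hInv _ ih).choose_spec _ hb
    intro t hF
    exact Set.eq_empty_iff_forall_notMem.1 hSF _ ⟨hS t, hF⟩
  · -- disjoint from F
    ext z0
    simp only [Set.mem_inter_iff, Set.mem_empty_iff_false, iff_false, not_and]
    rintro ⟨π, hsafe⟩ hF
    classical
    -- build an admissible adversary sequence
    let s : ℕ → Z := fun t => Nat.rec z0 (fun _ z => f z (π z) ((hB z).some)) t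
    let b : ℕ → B := fun t => (hB (s t)).some
    have hts : ∀ t, traj f π b z0 t = s t := by
      intro t
      induction t with
      | zero => rfl
      | succ t ih => show f _ _ _ = _; rw [ih]
    have hadm : ∀ t, b t ∈ Badm (traj f π b z0 t) := by
      intro t; rw [hts t]; exact (hB (s t)).some_mem
    exact hsafe b hadm 0 hF
  · -- controlled invariant
    rintro z0 ⟨π, hsafe⟩
    refine ⟨π z0, fun b0 hb0 => ⟨π, fun b hadm => ?_⟩⟩
    set z1 := f z0 (π z0) b0 with hz1
    set b' : ℕ → B := fun t => Nat.rec b0 (fun t _ => b t) t with hb'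
    have hshift : ∀ t, traj f π b' z0 (t + 1) = traj f π b z1 t := by
      intro t
      induction t with
      | zero => rfl
      | succ t ih => show f _ _ _ = f _ _ _; rw [ih]
    have hadm' : ∀ t, b' t ∈ Badm (traj f π b' z0 t) := by
      intro t
      cases t with
      | zero => exact hb0
      | succ t => rw [hshift t]; exact hadm t
    intro t hF
    exact hsafe b' hadm' (t + 1) (by rw [hshift t]; exact hF)
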